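/- For every integer ℓ ≥ 1, the map sending x ∈ {0,1}^n to the vector (Tr(x)_1 mod 2, Tr(x)_2 mod 2, ..., Tr(x)_n mod 2) of the first n entries of its ℓ-read vector taken modulo 2 is injective; likewise the map sending x to the last n entries of Tr(x) taken modulo 2 is injective. -/

import Mathlib

/-- The ℓ-read vector of a binary vector `x` (as a list of Booleans): its entry at 0-based
index `i` (1-indexed `i+1`) is the Hamming weight of the window of `ℓ` consecutive
coordinates of `x` ending at 1-indexed position `i+1`, with out-of-range coordinates taken
to be `0` (`false`). -/
def readVec (ℓ : ℕ) (x : List Bool) : List ℕ :=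
  (List.range (x.length + ℓ - 1)).map fun i =>
    (((List.replicate (ℓ - 1) false ++ x ++ List.replicate (ℓ - 1) false).drop i).take ℓ).count true

/-- For every `ℓ ≥ 1`, the map sending `x ∈ {0,1}ⁿ` to the first `n`
entries of its `ℓ`-read vector taken modulo 2 is injective; likewise the map sending `x`
to the last `n` entries of `Tr(x)` taken modulo 2 is injective. (The read vector has
length `n+ℓ-1`, so the last `n` entries are obtained by dropping the first `ℓ-1`.) -/
lemma count_take_pad (m k : ℕ) (x : List Bool) :
    ((List.replicate m false ++ x ++ List.replicate m false).take k).count true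
      = (x.take (k - m)).count true := by
  simp [List.take_append, List.count_append, List.take_replicate,
    List.count_replicate]

lemma window_count (ℓ : ℕ) (hℓ : 1 ≤ ℓ) (x : List Bool) (i : ℕ) :
    (((List.replicate (ℓ - 1) false ++ x ++ List.replicate (ℓ - 1) false).drop i).take ℓ).count true
      + (x.take (i + 1 - ℓ)).count true = (x.take (i + 1)).count true := by
  have h := List.take_add (l := List.replicate (ℓ - 1) false ++ x ++ List.replicate (ℓ - 1) false) (i := i) (j := ℓ)
  have h1 := congrArg (List.count true) h
  rw [List.count_append, count_take_pad, count_take_pad] at h1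
  have e1 : i + ℓ - (ℓ - 1) = i + 1 := by omega
  have e2 : i - (ℓ - 1) = i + 1 - ℓ := by omega
  rw [e1, e2] at h1
  omega

lemma readVec_getElem? (ℓ : ℕ) (x : List Bool) (i : ℕ) (h : i < x.length + ℓ - 1) :
    (readVec ℓ x)[i]? = some
      ((((List.replicate (ℓ - 1) false ++ x ++ List.replicate (ℓ - 1) false).drop i).take ℓ).count true) := by
  simp [readVec, List.getElem?_map, List.getElem?_range, h]

theorem readVec_mod_two_injective (ℓ : ℕ) (hℓ : 1 ≤ ℓ) (n : ℕ) :
    (∀ x y : List Bool, x.length = n → y.length = n →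
      ((readVec ℓ x).take n).map (· % 2) = ((readVec ℓ y).take n).map (· % 2) → x = y) ∧
    (∀ x y : List Bool, x.length = n → y.length = n →
      ((readVec ℓ x).drop (ℓ - 1)).map (· % 2) = ((readVec ℓ y).drop (ℓ - 1)).map (· % 2) →
        x = y) := by
  constructor
  · intro x y hx hy h
    -- entries equal mod 2
    have hent : ∀ i, i < n →
        (((List.replicate (ℓ - 1) false ++ x ++ List.replicate (ℓ - 1) false).drop i).take ℓ).count true % 2
        = (((List.replicate (ℓ - 1) false ++ y ++ List.replicate (ℓ - 1) false).drop i).take ℓ).count true % 2 := by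
      intro i hi
      have := congrArg (fun l => l[i]?) h
      simp only [List.getElem?_map, List.getElem?_take, hi, if_pos] at this
      rw [readVec_getElem? ℓ x i (by omega), readVec_getElem? ℓ y i (by omega)] at this
      simpa using this
    have key : ∀ m, m ≤ n → (x.take m).count true % 2 = (y.take m).count true % 2 := by
      intro m
      induction m using Nat.strong_induction_on with
      | _ m ih =>
        intro hm
        match m with
        | 0 => simp
        | Nat.succ i =>
          have hw := hent i (by omega)
          have wx := window_count ℓ hℓ x i
          have wy := window_count ℓ hℓ y i
          have hprev := ih (i + 1 - ℓ) (by omega) (by omega)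
          show (x.take (i + 1)).count true % 2 = (y.take (i + 1)).count true % 2
          omega
    apply List.ext_getElem (by rw [hx, hy])
    intro i h1 h2
    have c1 := key i (by omega)
    have c2 := key (i + 1) (by omega)
    have tx : (x.take (i + 1)).count true = (x.take i).count true + (if x[i] then 1 else 0) := by
      rw [List.take_succ, List.count_append, List.getElem?_eq_getElem h1]
      cases x[i] <;> simp
    have ty : (y.take (i + 1)).count true = (y.take i).count true + (if y[i] then 1 else 0) := by
      rw [List.take_succ, List.count_append, List.getElem?_eq_getElem h2]
      cases y[i] <;> simp
    cases hxi : x[i] <;> cases hyi : y[i] <;> simp [hxi, hyi] at tx ty ⊢ <;> omega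
  · intro x y hx hy h
    have hent : ∀ j, j < n →
        (((List.replicate (ℓ - 1) false ++ x ++ List.replicate (ℓ - 1) false).drop (ℓ - 1 + j)).take ℓ).count true % 2
        = (((List.replicate (ℓ - 1) false ++ y ++ List.replicate (ℓ - 1) false).drop (ℓ - 1 + j)).take ℓ).count true % 2 := by
      intro j hj
      have := congrArg (fun l => l[j]?) h
      simp only [List.getElem?_map, List.getElem?_drop] at this
      rw [readVec_getElem? ℓ x (ℓ - 1 + j) (by omega), readVec_getElem? ℓ y (ℓ - 1 + j) (by omega)] at this
      simpa using this
    -- window at index ℓ-1+j relates prefix counts at j and j+ℓ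
    have wrel : ∀ (z : List Bool) (j : ℕ),
        (((List.replicate (ℓ - 1) false ++ z ++ List.replicate (ℓ - 1) false).drop (ℓ - 1 + j)).take ℓ).count true
          + (z.take j).count true = (z.take (j + ℓ)).count true := by
      intro z j
      have := window_count ℓ hℓ z (ℓ - 1 + j)
      have e1 : ℓ - 1 + j + 1 - ℓ = j := by omega
      have e2 : ℓ - 1 + j + 1 = j + ℓ := by omega
      rw [e1, e2] at this
      exact this
    have total : ∀ (z : List Bool) (m : ℕ),
        (z.take m).count true + (z.drop m).count true = z.count true := by
      intro z m
      rw [← List.count_append, List.take_append_drop]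
    have key : ∀ k j, n - j ≤ k → (x.drop j).count true % 2 = (y.drop j).count true % 2 := by
      intro k
      induction k with
      | zero =>
        intro j hj
        rw [List.drop_eq_nil_of_le (by omega), List.drop_eq_nil_of_le (by omega)]
      | succ k ih =>
        intro j hj
        by_cases hjn : n ≤ j
        · rw [List.drop_eq_nil_of_le (by omega), List.drop_eq_nil_of_le (by omega)]
        · have hw := hent j (by omega)
          have wx := wrel x j
          have wy := wrel y j
          have tx1 := total x j
          have tx2 := total x (j + ℓ)
          have ty1 := total y j
          have ty2 := total y (j + ℓ)
          have hprev := ih (j + ℓ) (by omega)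
          omega
    apply List.ext_getElem (by rw [hx, hy])
    intro i h1 h2
    have c1 := key n i (by omega)
    have c2 := key n (i + 1) (by omega)
    have tx : (x.drop i).count true = (if x[i] then 1 else 0) + (x.drop (i + 1)).count true := by
      rw [List.drop_eq_getElem_cons h1, List.count_cons]
      cases x[i] <;> simp <;> omega
    have ty : (y.drop i).count true = (if y[i] then 1 else 0) + (y.drop (i + 1)).count true := by
      rw [List.drop_eq_getElem_cons h2, List.count_cons]
      cases y[i] <;> simp <;> omega
    cases hxi : x[i] <;> cases hyi : y[i] <;> simp [hxi, hyi] at tx ty ⊢ <;> omega
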